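/- Let G = (V,E) be a finite simple undirected graph with positive edge weights and unique shortest paths, let s, v, x, y be vertices with d_G(v,x) ≤ d_G(s,v), d_G(x,y) ≤ 2 · d_G(s,v), and d_G(y,s) ≤ 4 · d_G(s,v), and let f ∈ E be an edge lying on the unique shortest path π(s,v) such that s and v are connected in G − f. Then d_{G−f}(v,x) + d_{G−f}(x,y) + d_{G−f}(y,s) ≤ 13 · d_{G−f}(s,v). (This is the mathematical core of Lemma 4.1 / Theorem 2: the distance estimate returned via the two-level landmark vertices x and y has multiplicative stretch at most 13.) -/

import Mathlib

open scoped ENNReal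

variable {V : Type*}

/-- The total weight of a walk: the sum of the weights of its edges (in `ℝ≥0∞`). -/
noncomputable def walkWeight {G : SimpleGraph V} (wt : Sym2 V → NNReal)
    {u v : V} (p : G.Walk u v) : ℝ≥0∞ :=
  (p.edges.map (fun e => (wt e : ℝ≥0∞))).sum

/-- The weighted shortest-path distance: the infimum over all walks from `u` to `v`
of their total weight (in `ℝ≥0∞`, so it is `∞` if `u` and `v` are not connected). -/
noncomputable def wdist (G : SimpleGraph V) (wt : Sym2 V → NNReal) (u v : V) : ℝ≥0∞ :=
  ⨅ p : G.Walk u v, walkWeight wt p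

/-- `G` has unique shortest paths: for every pair of connected vertices there is exactly
one walk of minimum total weight. -/
def HasUniqueShortestPaths (G : SimpleGraph V) (wt : Sym2 V → NNReal) : Prop :=
  ∀ u v : V, G.Reachable u v →
    ∃! p : G.Walk u v, walkWeight wt p = wdist G wt u v

lemma walkWeight_nil {G : SimpleGraph V} (wt : Sym2 V → NNReal) {u : V} :
    walkWeight wt (SimpleGraph.Walk.nil : G.Walk u u) = 0 := by simp [walkWeight]

lemma walkWeight_cons {G : SimpleGraph V} (wt : Sym2 V → NNReal) {u v w : V}
    (h : G.Adj u v) (p : G.Walk v w) :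
    walkWeight wt (SimpleGraph.Walk.cons h p) = (wt s(u,v) : ℝ≥0∞) + walkWeight wt p := by
  simp [walkWeight]

lemma walkWeight_append {G : SimpleGraph V} (wt : Sym2 V → NNReal) {u v w : V}
    (p : G.Walk u v) (q : G.Walk v w) :
    walkWeight wt (p.append q) = walkWeight wt p + walkWeight wt q := by
  simp [walkWeight, SimpleGraph.Walk.edges_append]

lemma walkWeight_reverse {G : SimpleGraph V} (wt : Sym2 V → NNReal) {u v : V}
    (p : G.Walk u v) : walkWeight wt p.reverse = walkWeight wt p := by
  simp [walkWeight, SimpleGraph.Walk.edges_reverse, List.sum_reverse]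

lemma walkWeight_transfer {G H : SimpleGraph V} (wt : Sym2 V → NNReal) {u v : V}
    (p : G.Walk u v) (hp : ∀ e ∈ p.edges, e ∈ H.edgeSet) :
    walkWeight wt (p.transfer H hp) = walkWeight wt p := by
  simp [walkWeight, SimpleGraph.Walk.edges_transfer]

lemma walkWeight_ne_top {G : SimpleGraph V} (wt : Sym2 V → NNReal) {u v : V}
    (p : G.Walk u v) : walkWeight wt p ≠ ⊤ := by
  induction p with
  | nil => simp [walkWeight_nil]
  | cons h p ih => rw [walkWeight_cons]; exact ENNReal.add_ne_top.2 ⟨ENNReal.coe_ne_top, ih⟩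

lemma wdist_le {G : SimpleGraph V} (wt : Sym2 V → NNReal) {u v : V} (p : G.Walk u v) :
    wdist G wt u v ≤ walkWeight wt p := iInf_le _ p

lemma wdist_symm (G : SimpleGraph V) (wt : Sym2 V → NNReal) (u v : V) :
    wdist G wt u v = wdist G wt v u := by
  have h : ∀ a b : V, wdist G wt a b ≤ wdist G wt b a := by
    intro a b
    refine le_iInf fun p => ?_
    exact (wdist_le wt p.reverse).trans_eq (walkWeight_reverse wt p)
  exact le_antisymm (h u v) (h v u)

lemma wdist_triangle (G : SimpleGraph V) (wt : Sym2 V → NNReal) (u v w : V) :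
    wdist G wt u w ≤ wdist G wt u v + wdist G wt v w := by
  simp only [wdist]
  rw [ENNReal.iInf_add]
  refine le_iInf fun p => ?_
  rw [ENNReal.add_iInf]
  refine le_iInf fun q => ?_
  exact (wdist_le wt (p.append q)).trans_eq (walkWeight_append wt p q)

lemma wdist_le_wdist_deleteEdges (G : SimpleGraph V) (wt : Sym2 V → NNReal)
    (S : Set (Sym2 V)) (u v : V) :
    wdist G wt u v ≤ wdist (G.deleteEdges S) wt u v := by
  refine le_iInf fun p => ?_
  have hp : ∀ e ∈ p.edges, e ∈ G.edgeSet := fun e he => by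
    have := p.edges_subset_edgeSet he
    rw [SimpleGraph.edgeSet_deleteEdges] at this
    exact this.1
  exact (wdist_le wt (p.transfer G hp)).trans_eq (walkWeight_transfer wt p hp)

/-- Split a walk at the first occurrence of an edge `e`. -/
lemma split_first {G : SimpleGraph V} (wt : Sym2 V → NNReal) {u w : V}
    (p : G.Walk u w) (e : Sym2 V) (he : e ∈ p.edges) :
    ∃ (c d : V) (q : G.Walk u c) (r : G.Walk d w), s(c,d) = e ∧ e ∉ q.edges ∧
      walkWeight wt q + (wt e : ℝ≥0∞) + walkWeight wt r ≤ walkWeight wt p ∧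
      r.length < p.length := by
  induction p with
  | nil => simp at he
  | @cons u v' w h p ih =>
    by_cases hfirst : e = s(u, v')
    · refine ⟨u, v', SimpleGraph.Walk.nil, p, hfirst.symm, by simp, ?_, by simp⟩
      rw [walkWeight_nil, walkWeight_cons, zero_add, hfirst]
    · have he' : e ∈ p.edges := by
        rcases List.mem_cons.1 (by simpa using he) with h1 | h2
        · exact absurd h1 hfirst
        · exact h2
      obtain ⟨c, d, q', r', hcd, heq, hw, hlen⟩ := ih he'
      refine ⟨c, d, SimpleGraph.Walk.cons h q', r', hcd, ?_, ?_, by simp; omega⟩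
      · simp only [SimpleGraph.Walk.edges_cons, List.mem_cons]
        rintro (h1 | h2)
        · exact hfirst h1
        · exact heq h2
      · rw [walkWeight_cons, walkWeight_cons, add_assoc, add_assoc]
        exact add_le_add_right (by rw [← add_assoc]; exact hw) _

/-- Either find a subwalk avoiding `e`, or split the walk at `e` with both pieces avoiding `e`. -/
lemma split_avoid {G : SimpleGraph V} (wt : Sym2 V → NNReal) {w : V} (e : Sym2 V) :
    ∀ (n : ℕ) {u : V} (p : G.Walk u w), p.length ≤ n → e ∈ p.edges →
      (∃ q : G.Walk u w, e ∉ q.edges ∧ walkWeight wt q ≤ walkWeight wt p) ∨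
      (∃ (c d : V) (q : G.Walk u c) (r : G.Walk d w), s(c,d) = e ∧ e ∉ q.edges ∧ e ∉ r.edges ∧
        walkWeight wt q + walkWeight wt r ≤ walkWeight wt p) := by
  intro n
  induction n with
  | zero =>
    intro u p hlen he
    have : p.edges.length = 0 := by rw [p.length_edges]; omega
    rw [List.length_eq_zero_iff] at this
    rw [this] at he; simp at he
  | succ n ih =>
    intro u p hlen he
    obtain ⟨c, d, q, r, hcd, heq, hw, hrlen⟩ := split_first wt p e he
    by_cases her : e ∈ r.edges
    · rcases ih r (by omega) her with ⟨r', her', hwr'⟩ | ⟨c', d', q', r', hcd', heq', her', hw'⟩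
      · refine Or.inr ⟨c, d, q, r', hcd, heq, her', ?_⟩
        calc walkWeight wt q + walkWeight wt r' ≤ walkWeight wt q + walkWeight wt r :=
              add_le_add_right hwr' _
          _ ≤ walkWeight wt q + ↑(wt e) + walkWeight wt r := by
              rw [add_assoc]; exact add_le_add_right (le_add_self) _
          _ ≤ walkWeight wt p := hw
      · have hkey : walkWeight wt q + (walkWeight wt q' + walkWeight wt r') ≤ walkWeight wt p := by
          calc walkWeight wt q + (walkWeight wt q' + walkWeight wt r')
              ≤ walkWeight wt q + walkWeight wt r := add_le_add_right hw' _
            _ ≤ walkWeight wt q + ↑(wt e) + walkWeight wt r := by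
                rw [add_assoc]; exact add_le_add_right (le_add_self) _
            _ ≤ walkWeight wt p := hw
        have horient : (c' = c ∧ d' = d) ∨ (c' = d ∧ d' = c) := by
          have := hcd'.trans hcd.symm
          rw [Sym2.eq_iff] at this
          tauto
        rcases horient with ⟨h1, h2⟩ | ⟨h1, h2⟩ <;> subst h1 <;> subst h2
        · refine Or.inr ⟨_, _, q, r', hcd, heq, her', ?_⟩
          calc walkWeight wt q + walkWeight wt r'
              ≤ walkWeight wt q + (walkWeight wt q' + walkWeight wt r') :=
                add_le_add_right (le_add_self) _
            _ ≤ walkWeight wt p := hkey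
        · refine Or.inl ⟨q.append r', ?_, ?_⟩
          · rw [SimpleGraph.Walk.edges_append]
            simp only [List.mem_append]
            rintro (h1 | h2)
            · exact heq h1
            · exact her' h2
          · rw [walkWeight_append]
            calc walkWeight wt q + walkWeight wt r'
                ≤ walkWeight wt q + (walkWeight wt q' + walkWeight wt r') :=
                  add_le_add_right (le_add_self) _
              _ ≤ walkWeight wt p := hkey
    · refine Or.inr ⟨c, d, q, r, hcd, heq, her, ?_⟩
      calc walkWeight wt q + walkWeight wt r
          ≤ walkWeight wt q + ↑(wt e) + walkWeight wt r := by
            rw [add_assoc]; exact add_le_add_right (le_add_self) _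
        _ ≤ walkWeight wt p := hw

/-- A walk avoiding `e` can be transferred to `G.deleteEdges {e}`, bounding `wdist` there. -/
lemma wdist_delete_le_of_avoid {G : SimpleGraph V} (wt : Sym2 V → NNReal) {u w : V}
    (e : Sym2 V) (p : G.Walk u w) (hp : e ∉ p.edges) :
    wdist (G.deleteEdges {e}) wt u w ≤ walkWeight wt p := by
  have h : ∀ e' ∈ p.edges, e' ∈ (G.deleteEdges {e}).edgeSet := by
    intro e' he'
    rw [SimpleGraph.edgeSet_deleteEdges]
    refine ⟨p.edges_subset_edgeSet he', ?_⟩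
    simp only [Set.mem_singleton_iff]
    rintro rfl; exact hp he'
  exact (wdist_le wt (p.transfer _ h)).trans_eq (walkWeight_transfer wt p h)

/-- Key detour lemma: deleting the edge `s(a,b)` increases the length of any walk by at most
the replacement distance between `a` and `b`. -/
lemma wdist_delete_le_walkWeight_add {G : SimpleGraph V} (wt : Sym2 V → NNReal) {u w : V}
    (a b : V) (p : G.Walk u w) :
    wdist (G.deleteEdges {s(a,b)}) wt u w ≤
      walkWeight wt p + wdist (G.deleteEdges {s(a,b)}) wt a b := by
  set e := s(a,b) with hedef
  by_cases hep : e ∈ p.edges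
  · rcases split_avoid wt e p.length p le_rfl hep with ⟨q, hq, hwq⟩ |
      ⟨c, d, q, r, hcd, heq, her, hw⟩
    · exact ((wdist_delete_le_of_avoid wt e q hq).trans hwq).trans le_self_add
    · have hcd' : wdist (G.deleteEdges {e}) wt c d = wdist (G.deleteEdges {e}) wt a b := by
        rw [hedef] at hcd
        rw [Sym2.eq_iff] at hcd
        rcases hcd with ⟨rfl, rfl⟩ | ⟨rfl, rfl⟩
        · rfl
        · exact wdist_symm _ _ _ _
      calc wdist (G.deleteEdges {e}) wt u w
          ≤ wdist (G.deleteEdges {e}) wt u c + wdist (G.deleteEdges {e}) wt c d +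
            wdist (G.deleteEdges {e}) wt d w := by
            refine (wdist_triangle _ wt u d w).trans ?_
            exact add_le_add_left (wdist_triangle _ wt u c d) _
        _ ≤ walkWeight wt q + wdist (G.deleteEdges {e}) wt a b + walkWeight wt r := by
            rw [hcd']
            exact add_le_add (add_le_add_left (wdist_delete_le_of_avoid wt e q heq) _)
              (wdist_delete_le_of_avoid wt e r her)
        _ = (walkWeight wt q + walkWeight wt r) + wdist (G.deleteEdges {e}) wt a b := by ring
        _ ≤ walkWeight wt p + wdist (G.deleteEdges {e}) wt a b := add_le_add_left hw _
  · exact (wdist_delete_le_of_avoid wt e p hep).trans le_self_add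

/-- `wdist` is finite iff reachable; we only need one direction. -/
lemma reachable_of_wdist_ne_top {G : SimpleGraph V} {wt : Sym2 V → NNReal} {u w : V}
    (h : wdist G wt u w ≠ ⊤) : G.Reachable u w := by
  by_contra hr
  have : IsEmpty (G.Walk u w) := ⟨fun p => hr ⟨p⟩⟩
  rw [wdist, iInf_of_empty] at h
  exact h rfl


theorem stmt19 [Fintype V] [DecidableEq V] (G : SimpleGraph V) (wt : Sym2 V → NNReal)
    (hwt : ∀ e ∈ G.edgeSet, 0 < wt e)
    (huniq : HasUniqueShortestPaths G wt)
    (s v x y : V)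
    (hvx : wdist G wt v x ≤ wdist G wt s v)
    (hxy : wdist G wt x y ≤ 2 * wdist G wt s v)
    (hys : wdist G wt y s ≤ 4 * wdist G wt s v)
    (f : Sym2 V) (hf : f ∈ G.edgeSet)
    (qsv : G.Walk s v) (hqsv : walkWeight wt qsv = wdist G wt s v)
    (hfq : f ∈ qsv.edges)
    (hconn : (G.deleteEdges {f}).Reachable s v) :
    wdist (G.deleteEdges {f}) wt v x + wdist (G.deleteEdges {f}) wt x y +
        wdist (G.deleteEdges {f}) wt y s ≤
      13 * wdist (G.deleteEdges {f}) wt s v := by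
  induction f using Sym2.ind with
  | _ a b =>
  set G' := G.deleteEdges {s(a,b)} with hG'
  set d := wdist G wt s v with hd
  set D := wdist G' wt s v with hD
  have hdD : d ≤ D := wdist_le_wdist_deleteEdges G wt _ s v
  have hdtop : d ≠ ⊤ := hqsv ▸ walkWeight_ne_top wt qsv
  have hsym : ∀ c d₀ : V, s(c,d₀) = s(a,b) → wdist G' wt c d₀ = wdist G' wt a b := by
    intro c d₀ hcd
    rw [Sym2.eq_iff] at hcd
    rcases hcd with ⟨rfl, rfl⟩ | ⟨rfl, rfl⟩
    · rfl
    · exact wdist_symm _ _ _ _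
  have hK : wdist G' wt a b ≤ d + D := by
    rcases split_avoid wt s(a,b) qsv.length qsv le_rfl hfq with ⟨q, hq, hwq⟩ |
      ⟨c, d₀, q, r, hcd, heq, her, hw⟩
    · exfalso
      have h1 : walkWeight wt q = wdist G wt s v :=
        le_antisymm (hwq.trans_eq hqsv) (wdist_le wt q)
      obtain ⟨p₀, hp₀, huni⟩ := huniq s v ⟨qsv⟩
      have heqw : q = qsv := (huni q h1).trans (huni qsv hqsv).symm
      rw [heqw] at hq; exact hq hfq
    · have h1 : wdist G' wt s c ≤ walkWeight wt q := wdist_delete_le_of_avoid wt _ q heq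
      have h2 : wdist G' wt d₀ v ≤ walkWeight wt r := wdist_delete_le_of_avoid wt _ r her
      calc wdist G' wt a b = wdist G' wt c d₀ := (hsym c d₀ hcd).symm
        _ ≤ wdist G' wt c s + wdist G' wt s v + wdist G' wt v d₀ :=
            (wdist_triangle _ wt c v d₀).trans
              (add_le_add_left (wdist_triangle _ wt c s v) _)
        _ ≤ walkWeight wt q + D + walkWeight wt r := by
            refine add_le_add (add_le_add ?_ le_rfl) ?_
            · exact (wdist_symm G' wt c s).trans_le h1
            · exact (wdist_symm G' wt v d₀).trans_le h2
        _ = (walkWeight wt q + walkWeight wt r) + D := by ring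
        _ ≤ d + D := add_le_add_left (hw.trans_eq hqsv) _
  have hpair : ∀ u w : V, wdist G wt u w ≠ ⊤ →
      wdist G' wt u w ≤ wdist G wt u w + wdist G' wt a b := by
    intro u w hne
    obtain ⟨p, hp, -⟩ := huniq u w (reachable_of_wdist_ne_top hne)
    have := wdist_delete_le_walkWeight_add wt a b p
    rwa [hp] at this
  have b1 := hpair v x (ne_top_of_le_ne_top hdtop hvx)
  have b2 := hpair x y (ne_top_of_le_ne_top (ENNReal.mul_ne_top (by norm_num) hdtop) hxy)
  have b3 := hpair y s (ne_top_of_le_ne_top (ENNReal.mul_ne_top (by norm_num) hdtop) hys)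
  calc wdist G' wt v x + wdist G' wt x y + wdist G' wt y s
      ≤ (wdist G wt v x + wdist G' wt a b) + (wdist G wt x y + wdist G' wt a b) +
        (wdist G wt y s + wdist G' wt a b) := add_le_add (add_le_add b1 b2) b3
    _ ≤ (d + (d + D)) + (2 * d + (d + D)) + (4 * d + (d + D)) := by gcongr
    _ = 10 * d + 3 * D := by ring
    _ ≤ 10 * D + 3 * D := by gcongr
    _ = 13 * D := by ring
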